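/- Fix h(z), b(z) ∈ ℂ((z)) with h′(z) ≠ 0 and c ∈ ℂ. Define, for each i ∈ ℤ, the first-order differential operator ρ(L_i) = −(h(z)^{i+1}/h′(z))∂ + (b(z) + i·c)·h(z)^i on ℂ((z)). Then [ρ(L_i), ρ(L_j)] = (i−j)ρ(L_{i+j}) for all i, j ∈ ℤ; i.e. ρ is a representation of the Witt algebra. -/

import Mathlib

set_option synthInstance.maxHeartbeats 1000000
set_option maxHeartbeats 1000000

noncomputable section

/-- The derivative `∂ = d/dz` on `ℂ((z))`, as a `ℂ`-linear endomorphism. -/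
def Dz : Module.End ℂ (LaurentSeries ℂ) := LaurentSeries.derivative ℂ

/-- Multiplication by a Laurent series `g`, as a `ℂ`-linear endomorphism of `ℂ((z))`. -/
def mz (g : LaurentSeries ℂ) : Module.End ℂ (LaurentSeries ℂ) where
  toFun f := g * f
  map_add' := mul_add g
  map_smul' c f := by
    show g * (c • f) = c • (g * f)
    rw [← HahnSeries.single_zero_mul_eq_smul, ← HahnSeries.single_zero_mul_eq_smul, mul_left_comm]

/-- `P` is a differential operator on `ℂ((z))` of order `≤ k`: `P = Σ_{j=0}^{k} ξ_j ∂^j`. -/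
def DiffOrderLE (P : Module.End ℂ (LaurentSeries ℂ)) (k : ℕ) : Prop :=
  ∃ ξ : ℕ → LaurentSeries ℂ, P = ∑ j ∈ Finset.range (k + 1), mz (ξ j) * Dz ^ j

/-- `P` is a differential operator on `ℂ((z))` of order `< k` (for `k = 0` this means `P = 0`). -/
def DiffOrderLT (P : Module.End ℂ (LaurentSeries ℂ)) (k : ℕ) : Prop :=
  ∃ ξ : ℕ → LaurentSeries ℂ, P = ∑ j ∈ Finset.range k, mz (ξ j) * Dz ^ j

/-- `P` is a differential operator on `ℂ((z))` of order exactly `k`. -/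
def HasOrder (P : Module.End ℂ (LaurentSeries ℂ)) (k : ℕ) : Prop :=
  DiffOrderLE P k ∧ ¬ DiffOrderLT P k

lemma Dz_coeff (f : LaurentSeries ℂ) (n : ℤ) : (Dz f).coeff n = (n+1 : ℤ) • f.coeff (n+1) := by
  show (LaurentSeries.derivative ℂ f).coeff n = _
  rw [LaurentSeries.derivative_apply, LaurentSeries.hasseDeriv_coeff]
  norm_num [Ring.choose_one_right]

lemma key_mulDz : ∀ (u v : LaurentSeries ℂ) (n : ℤ),
      (u * Dz v).coeff n = ∑ ij ∈ Finset.addAntidiagonal u.isPWO_support v.isPWO_support (n+1),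
        (ij.2 : ℤ) • (u.coeff ij.1 * v.coeff ij.2) := by
    intro u v n
    have ht' : ((fun m : ℤ => m - 1) '' v.support).IsPWO :=
      v.isPWO_support.image_of_monotone (fun a b hab => by simpa using hab)
    have hsupp : (Dz v).support ⊆ (fun m : ℤ => m - 1) '' v.support := by
      intro j hj
      rw [HahnSeries.mem_support, Dz_coeff] at hj
      have hz : v.coeff (j+1) ≠ 0 := fun hz => hj (by rw [hz, smul_zero])
      exact ⟨j+1, hz, by simp⟩
    rw [HahnSeries.coeff_mul_right' ht' hsupp]
    refine Finset.sum_bij' (fun ij _ => (ij.1, ij.2 + 1)) (fun ij _ => (ij.1, ij.2 - 1))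
      ?_ ?_ ?_ ?_ ?_
    · rintro ⟨a1, a2⟩ ha
      simp only [Finset.addAntidiagonal, Finset.mem_addAntidiagonal] at ha ⊢
      obtain ⟨h1, ⟨m, hm, hm'⟩, h3⟩ := ha
      simp only at hm' ⊢
      refine ⟨h1, ?_, by omega⟩
      rwa [show a2 + 1 = m by omega]
    · rintro ⟨a1, a2⟩ ha
      simp only [Finset.addAntidiagonal, Finset.mem_addAntidiagonal] at ha ⊢
      obtain ⟨h1, h2, h3⟩ := ha
      exact ⟨h1, ⟨a2, h2, rfl⟩, by omega⟩
    · intro a _; simp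
    · intro a _; simp
    · rintro ⟨a1, a2⟩ ha
      simp only
      rw [Dz_coeff, mul_smul_comm]

lemma Dz_mul (f g : LaurentSeries ℂ) : Dz (f * g) = f * Dz g + Dz f * g := by
  ext n
  have e0 : (Dz (f * g)).coeff n = ∑ ij ∈ Finset.addAntidiagonal f.isPWO_support
      g.isPWO_support (n+1), ((n+1 : ℤ)) • (f.coeff ij.1 * g.coeff ij.2) := by
    rw [Dz_coeff, HahnSeries.coeff_mul, Finset.smul_sum]; rfl
  have e2 : (Dz f * g).coeff n = ∑ ij ∈ Finset.addAntidiagonal f.isPWO_support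
      g.isPWO_support (n+1), (ij.1 : ℤ) • (f.coeff ij.1 * g.coeff ij.2) := by
    rw [mul_comm (Dz f) g, key_mulDz g f n]
    refine Finset.sum_bij' (fun ij _ => (ij.2, ij.1)) (fun ij _ => (ij.2, ij.1)) ?_ ?_ ?_ ?_ ?_
    · rintro ⟨a1, a2⟩ ha
      simp only [Finset.addAntidiagonal, Finset.mem_addAntidiagonal] at ha ⊢
      exact ⟨ha.2.1, ha.1, by omega⟩
    · rintro ⟨a1, a2⟩ ha
      simp only [Finset.addAntidiagonal, Finset.mem_addAntidiagonal] at ha ⊢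
      exact ⟨ha.2.1, ha.1, by omega⟩
    · intro a _; simp
    · intro a _; simp
    · rintro ⟨a1, a2⟩ _
      simp [mul_comm]
  rw [HahnSeries.coeff_add, e0, key_mulDz f g n, e2, ← Finset.sum_add_distrib]
  apply Finset.sum_congr rfl
  intro ij hij
  rw [Finset.addAntidiagonal, Finset.mem_addAntidiagonal] at hij
  rw [← add_zsmul, add_comm ij.2 ij.1, hij.2.2]

lemma Dz_one : Dz (1 : LaurentSeries ℂ) = 0 := by
  have h1 : Dz (1 : LaurentSeries ℂ) = Dz 1 + Dz 1 := by
    conv_lhs => rw [show (1 : LaurentSeries ℂ) = 1 * 1 by ring, Dz_mul, mul_one, one_mul]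
  exact (left_eq_add.mp h1)

lemma Dz_C (x : ℂ) : Dz (HahnSeries.C x : LaurentSeries ℂ) = 0 := by
  have : (HahnSeries.C x : LaurentSeries ℂ) = x • 1 := by
    rw [← HahnSeries.C_mul_eq_smul, mul_one]
  rw [this, map_smul, Dz_one, smul_zero]

lemma Dz_inv (v : LaurentSeries ℂ) (hv : v ≠ 0) : Dz v⁻¹ = -(Dz v) / v ^ 2 := by
  have h1 : v * v⁻¹ = 1 := mul_inv_cancel₀ hv
  have h2 := congrArg Dz h1
  rw [Dz_mul, Dz_one] at h2
  rw [eq_div_iff (pow_ne_zero 2 hv)]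
  linear_combination v * h2 - Dz v * h1

lemma Dz_zpow (h : LaurentSeries ℂ) (hne : h ≠ 0) (i : ℤ) :
    Dz (h ^ i) = HahnSeries.C (i : ℂ) * h ^ i * Dz h / h := by
  induction i using Int.induction_on with
  | zero => simp [Dz_one]
  | succ k ih =>
      rw [zpow_add_one₀ hne, Dz_mul, ih]
      have hinv : h * h⁻¹ = 1 := mul_inv_cancel₀ hne
      push_cast
      simp only [map_add, map_one, div_eq_mul_inv]
      linear_combination (-(h ^ (k : ℤ) * Dz h)) * hinv
  | pred k ih =>
      rw [zpow_sub_one₀ hne, Dz_mul, ih, Dz_inv h hne]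
      have hinv : h * h⁻¹ = 1 := mul_inv_cancel₀ hne
      push_cast
      simp only [map_add, map_sub, map_neg, map_one, div_eq_mul_inv, mul_inv, pow_two]
      ring

lemma mz_apply (g x : LaurentSeries ℂ) : mz g x = g * x := rfl

lemma algebraMap_eq_C (x : ℂ) : algebraMap ℂ (LaurentSeries ℂ) x = HahnSeries.C x := by
  rw [HahnSeries.algebraMap_apply', PowerSeries.algebraMap_apply, Algebra.algebraMap_self,
    RingHom.id_apply, HahnSeries.ofPowerSeries_C]

/-- Fix `h, b ∈ ℂ((z))` with `h′ ≠ 0` and `c ∈ ℂ`.  The first-order operators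
`ρ(L i) = −(h^{i+1}/h′) ∂ + (b + i·c) h^i` satisfy `[ρ(L i), ρ(L j)] = (i−j) ρ(L (i+j))`
for all `i, j ∈ ℤ`, i.e. `ρ` is a representation of the Witt algebra. -/
theorem witt_representation_first_order
    (h b : LaurentSeries ℂ) (c : ℂ) (hder : Dz h ≠ 0)
    (ρ : ℤ → Module.End ℂ (LaurentSeries ℂ))
    (hρ : ∀ i : ℤ, ρ i = mz (-(h ^ (i + 1) / Dz h)) * Dz +
      mz ((b + algebraMap ℂ (LaurentSeries ℂ) ((i : ℂ) * c)) * h ^ i)) :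
    ∀ i j : ℤ, ⁅ρ i, ρ j⁆ = (((i : ℂ) - (j : ℂ))) • ρ (i + j) := by
  have hne : h ≠ 0 := by
    rintro rfl
    exact hder (map_zero Dz)
  intro i j
  apply LinearMap.ext
  intro f
  have happ : ∀ (k : ℤ) (x : LaurentSeries ℂ), ρ k x =
      -(h ^ (k+1) / Dz h) * Dz x + (b + HahnSeries.C ((k:ℂ) * c)) * h ^ k * x := by
    intro k x
    rw [hρ k, LinearMap.add_apply, Module.End.mul_apply, mz_apply, mz_apply,
      algebraMap_eq_C]
  rw [LieRing.of_associative_ring_bracket]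
  simp only [LinearMap.sub_apply, Module.End.mul_apply, LinearMap.smul_apply]
  rw [happ i, happ j, happ j, happ i, happ (i+j)]
  rw [← HahnSeries.C_mul_eq_smul]
  simp only [div_eq_mul_inv, map_add, map_neg, Dz_mul, Dz_C, Dz_zpow h hne,
    Dz_inv (Dz h) hder, mul_inv]
  simp only [div_eq_mul_inv, zpow_add₀ hne, zpow_one]
  push_cast
  simp only [map_add, map_mul, map_sub, map_one]
  rw [eq_comm, ← sub_eq_zero]
  field_simp [hne, hder]
  have d1 : Dz h * (Dz h)⁻¹ = 1 := mul_inv_cancel₀ hder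
  have h1 : h * h⁻¹ = 1 := mul_inv_cancel₀ hne
  linear_combination
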